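/- Let G and H be finite graphs each having at least one edge. Then Γ(G × H) ≥ Γ(G) + Γ(H) − 2. -/

import Mathlib

open SimpleGraph

/-- A greedy `k`-coloring of `G`: a partition of the vertex set into nonempty stable sets
`S 0, …, S (k-1)` such that for all `j < i`, every vertex of `S i` has a neighbor in `S j`. -/
def IsGreedyColoring {V : Type*} (G : SimpleGraph V) (k : ℕ) (S : Fin k → Set V) : Prop :=
  (∀ v : V, ∃! i, v ∈ S i) ∧
  (∀ i, (S i).Nonempty) ∧
  (∀ i, ∀ v ∈ S i, ∀ w ∈ S i, ¬ G.Adj v w) ∧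
  (∀ i j : Fin k, j < i → ∀ v ∈ S i, ∃ w ∈ S j, G.Adj v w)

/-- The Grundy number `Γ(G)`: the largest `k` such that `G` has a greedy `k`-coloring. -/
noncomputable def grundy {V : Type*} [Fintype V] (G : SimpleGraph V) : ℕ :=
  sSup {k | ∃ S : Fin k → Set V, IsGreedyColoring G k S}

/-- Direct (tensor) product `G × H`: `(a,x)` adjacent to `(b,y)` iff
`ab ∈ E(G)` and `xy ∈ E(H)`. -/
def tensorProd {α β : Type*} (G : SimpleGraph α) (H : SimpleGraph β) :
    SimpleGraph (α × β) where
  Adj x y := G.Adj x.1 y.1 ∧ H.Adj x.2 y.2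
  symm := ⟨fun _ _ h => ⟨G.adj_symm h.1, H.adj_symm h.2⟩⟩
  loopless := ⟨fun _ h => G.irrefl h.1⟩

/-! ### Auxiliary lemmas -/

lemma greedy_card_le {V : Type*} [Fintype V] {G : SimpleGraph V} {k : ℕ}
    {S : Fin k → Set V} (hc : IsGreedyColoring G k S) : k ≤ Fintype.card V := by
  obtain ⟨h1, h2, -, -⟩ := hc
  choose f hf using h2
  have hinj : Function.Injective f := by
    intro i j hij
    obtain ⟨c, -, hu⟩ := h1 (f i)
    have e1 := hu i (hf i)
    have e2 := hu j (by rw [hij]; exact hf j)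
    rw [e1, e2]
  calc k = Fintype.card (Fin k) := (Fintype.card_fin k).symm
    _ ≤ Fintype.card V := Fintype.card_le_of_injective f hinj

lemma greedy_bddAbove {V : Type*} [Fintype V] (G : SimpleGraph V) :
    BddAbove {k | ∃ S : Fin k → Set V, IsGreedyColoring G k S} :=
  ⟨Fintype.card V, fun _ ⟨_, hS⟩ => greedy_card_le hS⟩

lemma exists_greedy_on {V : Type*} [Fintype V] [DecidableEq V] (G : SimpleGraph V) :
    ∀ (n : ℕ) (s : Finset V), s.card ≤ n →
      ∃ (k : ℕ) (S : Fin k → Set V),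
        (∀ v ∈ s, ∃! i, v ∈ S i) ∧ (∀ i, (S i).Nonempty) ∧
        (∀ i, S i ⊆ ↑s) ∧
        (∀ i, ∀ v ∈ S i, ∀ w ∈ S i, ¬ G.Adj v w) ∧
        (∀ i j, j < i → ∀ v ∈ S i, ∃ w ∈ S j, G.Adj v w) := by
  classical
  intro n
  induction n with
  | zero =>
    intro s hs
    have hse : s = ∅ := Finset.card_eq_zero.mp (Nat.le_zero.mp hs)
    refine ⟨0, Fin.elim0, ?_, ?_, ?_, ?_, ?_⟩ <;>
      first
      | (intro v hv; rw [hse] at hv; exact absurd hv (Finset.notMem_empty v))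
      | (intro i; exact i.elim0)
      | (intro i j hij; exact i.elim0)
  | succ n ih =>
    intro s hs
    rcases eq_or_ne s ∅ with hse | hse
    · exact ih s (by simp [hse])
    have hsne : s.Nonempty := Finset.nonempty_iff_ne_empty.mpr hse
    -- family of stable subsets of s
    set F : Finset (Finset V) :=
      s.powerset.filter (fun t => ∀ v ∈ t, ∀ w ∈ t, ¬ G.Adj v w) with hF
    have hFne : F.Nonempty := by
      refine ⟨∅, ?_⟩
      rw [hF, Finset.mem_filter]
      simp
    obtain ⟨M, hMF, hMmax⟩ := F.exists_max_image Finset.card hFne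
    have hMs : M ⊆ s := by
      have := (Finset.mem_filter.mp hMF).1; exact Finset.mem_powerset.mp this
    have hMstable : ∀ v ∈ M, ∀ w ∈ M, ¬ G.Adj v w := (Finset.mem_filter.mp hMF).2
    have hMne : M.Nonempty := by
      obtain ⟨v, hv⟩ := hsne
      have h1 : ({v} : Finset V) ∈ F := by
        rw [hF, Finset.mem_filter]
        refine ⟨Finset.mem_powerset.mpr (Finset.singleton_subset_iff.mpr hv), ?_⟩
        intro a ha b hb
        rw [Finset.mem_singleton] at ha hb
        rw [ha, hb]; exact G.irrefl
      have := hMmax _ h1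
      simp only [Finset.card_singleton] at this
      exact Finset.card_pos.mp (by omega)
    -- every vertex of s \ M has a neighbor in M
    have hMnbr : ∀ v ∈ s, v ∉ M → ∃ w ∈ M, G.Adj v w := by
      intro v hvs hvM
      by_contra hno
      push_neg at hno
      have hins : insert v M ∈ F := by
        rw [hF, Finset.mem_filter]
        refine ⟨Finset.mem_powerset.mpr (Finset.insert_subset hvs hMs), ?_⟩
        intro a ha b hb hadj
        have ha' := Finset.mem_insert.mp ha
        have hb' := Finset.mem_insert.mp hb
        rcases ha' with ha' | ha' <;> rcases hb' with hb' | hb'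
        · rw [ha', hb'] at hadj; exact G.irrefl hadj
        · rw [ha'] at hadj; exact hno b hb' hadj
        · rw [hb'] at hadj; exact hno a ha' hadj.symm
        · exact hMstable a ha' b hb' hadj
      have := hMmax _ hins
      rw [Finset.card_insert_of_notMem hvM] at this
      omega
    obtain ⟨k, S, h1, h2, h3, h4, h5⟩ := ih (s \ M) (by
      have h6 : (s \ M).card = s.card - M.card := Finset.card_sdiff_of_subset hMs
      have h7 := hMne.card_pos
      omega)
    refine ⟨k + 1, Fin.cons (↑M) S, ?_, ?_, ?_, ?_, ?_⟩
    · intro v hv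
      by_cases hvM : v ∈ M
      · refine ⟨0, by simpa using hvM, ?_⟩
        intro j hj
        induction j using Fin.cases with
        | zero => rfl
        | succ j =>
          rw [Fin.cons_succ] at hj
          exact absurd ((h3 j hj)) (by simp [hvM])
      · obtain ⟨i, hi, hu⟩ := h1 v (Finset.mem_sdiff.mpr ⟨hv, hvM⟩)
        refine ⟨i.succ, by simpa using hi, ?_⟩
        intro j hj
        induction j using Fin.cases with
        | zero => exact absurd (by simpa using hj) hvM
        | succ j =>
          rw [Fin.cons_succ] at hj
          rw [hu j hj]
    · intro i
      induction i using Fin.cases with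
      | zero => simpa using hMne
      | succ i => simpa using h2 i
    · intro i
      induction i using Fin.cases with
      | zero => simpa using hMs
      | succ i =>
        rw [Fin.cons_succ]
        intro x hx
        have := h3 i hx
        simp only [Finset.coe_sdiff, Set.mem_diff] at this
        exact this.1
    · intro i
      induction i using Fin.cases with
      | zero => simpa using hMstable
      | succ i => simpa using h4 i
    · intro i j hij v hv
      induction i using Fin.cases with
      | zero => exact absurd hij (Fin.not_lt_zero j)
      | succ i =>
        rw [Fin.cons_succ] at hv
        induction j using Fin.cases with
        | zero =>
          have hvs : v ∈ s \ M := h3 i hv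
          obtain ⟨w, hw, hadj⟩ := hMnbr v (Finset.mem_sdiff.mp hvs).1 (Finset.mem_sdiff.mp hvs).2
          exact ⟨w, by simpa using hw, hadj⟩
        | succ j =>
          have hji : j < i := by
            rw [Fin.lt_def] at hij ⊢
            simpa using hij
          obtain ⟨w, hw, hadj⟩ := h5 i j hji v hv
          exact ⟨w, by simpa using hw, hadj⟩

lemma exists_greedy {V : Type*} [Fintype V] (G : SimpleGraph V) :
    ∃ (k : ℕ) (S : Fin k → Set V), IsGreedyColoring G k S := by
  classical
  obtain ⟨k, S, h1, h2, h3, h4, h5⟩ :=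
    exists_greedy_on G (Finset.univ.card) Finset.univ le_rfl
  exact ⟨k, S, fun v => h1 v (Finset.mem_univ v), h2, h4, h5⟩

lemma grundy_is_mem {V : Type*} [Fintype V] (G : SimpleGraph V) :
    ∃ S : Fin (grundy G) → Set V, IsGreedyColoring G (grundy G) S := by
  have hne : {k | ∃ S : Fin k → Set V, IsGreedyColoring G k S}.Nonempty := by
    obtain ⟨k, S, hS⟩ := exists_greedy G
    exact ⟨k, S, hS⟩
  exact Nat.sSup_mem hne (greedy_bddAbove G)

lemma two_le_grundy {V : Type*} [Fintype V] (G : SimpleGraph V)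
    (hG : ∃ u v, G.Adj u v) : 2 ≤ grundy G := by
  obtain ⟨S, h1, h2, h3, h4⟩ := grundy_is_mem G
  obtain ⟨u, v, huv⟩ := hG
  obtain ⟨i, hi, -⟩ := h1 u
  obtain ⟨j, hj, -⟩ := h1 v
  by_contra hlt
  have hi' := i.isLt
  have hj' := j.isLt
  have hij : i = j := by
    apply Fin.ext
    omega
  exact h3 j u (hij ▸ hi) v hj huv

/-- The numerical color used in the product construction. -/
noncomputable def pcolor {α β : Type*} {g h : ℕ} (NH : Set β) (cG : α → Fin g) (cH : β → Fin h)
    (PD : α → Prop) (p : α × β) : ℕ :=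
  open Classical in
  if p.2 ∈ NH then
    if (cG p.1 : ℕ) + 2 < g then (cG p.1 : ℕ)
    else if PD p.1 then g - 2 + (cH p.2 : ℕ)
    else g - 2
  else 0

section pcolorLemmas
variable {α β : Type*} {g h : ℕ} (NH : Set β) (cG : α → Fin g) (cH : β → Fin h)
    (PD : α → Prop) (p : α × β)

lemma pcolor_of_not_mem (hx : p.2 ∉ NH) : pcolor NH cG cH PD p = 0 := by
  simp [pcolor, hx]

lemma pcolor_low (hx : p.2 ∈ NH) (h2 : (cG p.1 : ℕ) + 2 < g) :
    pcolor NH cG cH PD p = (cG p.1 : ℕ) := by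
  simp [pcolor, hx, h2]

lemma pcolor_pd (hx : p.2 ∈ NH) (h2 : ¬ (cG p.1 : ℕ) + 2 < g) (hpd : PD p.1) :
    pcolor NH cG cH PD p = g - 2 + (cH p.2 : ℕ) := by
  simp [pcolor, hx, h2, hpd]

lemma pcolor_x (hx : p.2 ∈ NH) (h2 : ¬ (cG p.1 : ℕ) + 2 < g) (hpd : ¬ PD p.1) :
    pcolor NH cG cH PD p = g - 2 := by
  simp [pcolor, hx, h2, hpd]

end pcolorLemmas

set_option maxHeartbeats 2000000 in
lemma key_construction {α β : Type*} (G : SimpleGraph α) (H : SimpleGraph β)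
    {g h : ℕ} (hg : 2 ≤ g) (hh : 2 ≤ h)
    {S : Fin g → Set α} {T : Fin h → Set β}
    (hS : IsGreedyColoring G g S) (hT : IsGreedyColoring H h T) :
    ∃ C : Fin (g + h - 2) → Set (α × β),
      IsGreedyColoring (tensorProd G H) (g + h - 2) C := by
  classical
  obtain ⟨hS1, hS2, hS3, hS4⟩ := hS
  obtain ⟨hT1, hT2, hT3, hT4⟩ := hT
  choose cG hcG hcGu using hS1
  choose cH hcH hcHu using hT1
  set NH : Set β := {x | ∃ y, H.Adj x y} with hNHdef
  set top : Fin g := ⟨g - 1, by omega⟩ with htop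
  set sec : Fin g := ⟨g - 2, by omega⟩ with hsec
  have htopv : (top : ℕ) = g - 1 := rfl
  have hsecv : (sec : ℕ) = g - 2 := rfl
  set PD : α → Prop := fun a =>
    (cG a : ℕ) + 1 = g ∨ ((cG a : ℕ) + 2 = g ∧ ∃ b ∈ S top, G.Adj a b) with hPDdef
  set color : α × β → ℕ := pcolor NH cG cH PD with hcolor
  -- basic bound
  have hlt : ∀ p, color p < g + h - 2 := by
    intro p
    have h1 := (cG p.1).isLt
    have h2 := (cH p.2).isLt
    by_cases hx : p.2 ∈ NH
    · by_cases hl : (cG p.1 : ℕ) + 2 < g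
      · rw [hcolor, pcolor_low NH cG cH PD p hx hl]; omega
      · by_cases hpd : PD p.1
        · rw [hcolor, pcolor_pd NH cG cH PD p hx hl hpd]; omega
        · rw [hcolor, pcolor_x NH cG cH PD p hx hl hpd]; omega
    · rw [hcolor, pcolor_of_not_mem NH cG cH PD p hx]; omega
  -- all of PD lies in the top two classes
  have hPDge : ∀ a, PD a → g - 2 ≤ (cG a : ℕ) := by
    intro a ha
    simp only [hPDdef] at ha
    rcases ha with h1 | ⟨h1, -⟩ <;> omega
  -- the "X" condition pins the class
  have hXeq : ∀ a, ¬ (cG a : ℕ) + 2 < g → ¬ PD a → (cG a : ℕ) + 2 = g := by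
    intro a h1 h2
    have h3 := (cG a).isLt
    have hne : (cG a : ℕ) + 1 ≠ g := by
      intro hc
      exact h2 (Or.inl hc)
    omega
  -- every PD vertex has a PD neighbor
  have hPDnbr : ∀ a, PD a → ∃ b, PD b ∧ G.Adj a b := by
    intro a ha
    simp only [hPDdef] at ha
    rcases ha with h1 | ⟨h1, b, hb, hab⟩
    · -- a is in the top class
      have hca : cG a = top := by apply Fin.ext; rw [htopv]; omega
      have hlt' : sec < top := by rw [Fin.lt_def, htopv, hsecv]; omega
      obtain ⟨b, hb, hab⟩ := hS4 top sec hlt' a (hca ▸ hcG a)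
      have hcb : (cG b : ℕ) = g - 2 := by
        rw [← hcGu b sec hb]
      refine ⟨b, Or.inr ⟨by omega, a, hca ▸ hcG a, hab.symm⟩, hab⟩
    · have hcb : (cG b : ℕ) = g - 1 := by
        rw [← hcGu b top hb]
      exact ⟨b, Or.inl (by omega), hab⟩
  -- the lowest class of H meets NH
  have hT0 : ∃ x ∈ T ⟨0, by omega⟩, x ∈ NH := by
    obtain ⟨t, ht⟩ := hT2 ⟨1, by omega⟩
    have hlt' : (⟨0, by omega⟩ : Fin h) < ⟨1, by omega⟩ := by rw [Fin.lt_def]; simp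
    obtain ⟨y, hy, hadj⟩ := hT4 ⟨1, by omega⟩ ⟨0, by omega⟩ hlt' t ht
    exact ⟨y, hy, ⟨t, hadj.symm⟩⟩
  have hNHne : NH.Nonempty := by
    obtain ⟨x, -, hx⟩ := hT0
    exact ⟨x, hx⟩
  -- classes of H above the lowest lie in NH
  have hTNH : ∀ (j : Fin h), 0 < (j : ℕ) → ∀ x ∈ T j, x ∈ NH := by
    intro j hj x hx
    have hlt' : (⟨0, by omega⟩ : Fin h) < j := by rw [Fin.lt_def]; simpa
    obtain ⟨y, -, hadj⟩ := hT4 j ⟨0, by omega⟩ hlt' x hx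
    exact ⟨y, hadj⟩
  refine ⟨fun m => {p | color p = (m : ℕ)}, ?_, ?_, ?_, ?_⟩
  · -- partition
    intro p
    refine ⟨⟨color p, hlt p⟩, rfl, ?_⟩
    intro j hj
    exact Fin.ext (by simpa using hj.symm)
  · -- nonempty
    intro m
    rcases lt_or_ge ((m : ℕ) + 2) g with hm | hm
    · obtain ⟨a, ha⟩ := hS2 ⟨(m : ℕ), by omega⟩
      obtain ⟨x, hx⟩ := hNHne
      have hca : (cG a : ℕ) = (m : ℕ) := by
        rw [← hcGu a ⟨(m : ℕ), by omega⟩ ha]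
      refine ⟨(a, x), ?_⟩
      show color (a, x) = (m : ℕ)
      rw [hcolor, pcolor_low NH cG cH PD (a, x) hx (by simpa [hca] using hm)]
      simpa using hca
    · have hmlt := m.isLt
      obtain ⟨a, ha⟩ := hS2 top
      have hca : (cG a : ℕ) = g - 1 := by
        rw [← hcGu a top ha]
      have hpda : PD a := Or.inl (by omega)
      by_cases h0 : (m : ℕ) + 2 - g = 0
      · obtain ⟨x, hx, hxNH⟩ := hT0
        have hcx : (cH x : ℕ) = 0 := by
          have := hcHu x ⟨0, by omega⟩ hx
          rw [← this]
        refine ⟨(a, x), ?_⟩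
        show color (a, x) = (m : ℕ)
        rw [hcolor, pcolor_pd NH cG cH PD (a, x) hxNH (by simp; omega) hpda]
        show g - 2 + (cH x : ℕ) = (m : ℕ)
        omega
      · obtain ⟨x, hx⟩ := hT2 ⟨(m : ℕ) + 2 - g, by omega⟩
        have hxNH : x ∈ NH := hTNH _ (by simp; omega) x hx
        have hcx : (cH x : ℕ) = (m : ℕ) + 2 - g := by
          rw [← hcHu x ⟨(m : ℕ) + 2 - g, by omega⟩ hx]
        refine ⟨(a, x), ?_⟩
        show color (a, x) = (m : ℕ)
        rw [hcolor, pcolor_pd NH cG cH PD (a, x) hxNH (by simp; omega) hpda]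
        show g - 2 + (cH x : ℕ) = (m : ℕ)
        omega
  · -- stability
    intro m p hp q hq hadj
    obtain ⟨hA, hB⟩ := hadj
    have hp' : color p = (m : ℕ) := hp
    have hq' : color q = (m : ℕ) := hq
    have hpN : p.2 ∈ NH := ⟨q.2, hB⟩
    have hqN : q.2 ∈ NH := ⟨p.2, hB.symm⟩
    by_cases h2p : (cG p.1 : ℕ) + 2 < g <;> by_cases h2q : (cG q.1 : ℕ) + 2 < g
    · -- both low
      rw [hcolor, pcolor_low NH cG cH PD p hpN h2p] at hp'
      rw [hcolor, pcolor_low NH cG cH PD q hqN h2q] at hq'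
      have : cG p.1 = cG q.1 := Fin.ext (by omega)
      exact hS3 (cG p.1) p.1 (hcG p.1) q.1 (this ▸ hcG q.1) hA
    · -- p low, q high
      rw [hcolor, pcolor_low NH cG cH PD p hpN h2p] at hp'
      by_cases hpd : PD q.1
      · rw [hcolor, pcolor_pd NH cG cH PD q hqN h2q hpd] at hq'; omega
      · rw [hcolor, pcolor_x NH cG cH PD q hqN h2q hpd] at hq'; omega
    · -- p high, q low
      rw [hcolor, pcolor_low NH cG cH PD q hqN h2q] at hq'
      by_cases hpd : PD p.1
      · rw [hcolor, pcolor_pd NH cG cH PD p hpN h2p hpd] at hp'; omega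
      · rw [hcolor, pcolor_x NH cG cH PD p hpN h2p hpd] at hp'; omega
    · -- both high
      by_cases hpdp : PD p.1 <;> by_cases hpdq : PD q.1
      · -- both PD : same H class
        rw [hcolor, pcolor_pd NH cG cH PD p hpN h2p hpdp] at hp'
        rw [hcolor, pcolor_pd NH cG cH PD q hqN h2q hpdq] at hq'
        have : cH p.2 = cH q.2 := Fin.ext (by omega)
        exact hT3 (cH p.2) p.2 (hcH p.2) q.2 (this ▸ hcH q.2) hB
      · -- p PD, q X
        have hq2 : (cG q.1 : ℕ) + 2 = g := hXeq q.1 h2q hpdq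
        have hpdp' := hpdp
        simp only [hPDdef] at hpdp'
        rcases hpdp' with h1 | ⟨h1, -⟩
        · -- p in top class: q has no neighbor in top
          have hcp : cG p.1 = top := by apply Fin.ext; rw [htopv]; omega
          have hnot : ¬ ∃ b ∈ S top, G.Adj q.1 b := by
            intro hex
            exact hpdq (Or.inr ⟨hq2, hex⟩)
          exact hnot ⟨p.1, hcp ▸ hcG p.1, hA.symm⟩
        · -- both in second class
          have : cG p.1 = cG q.1 := Fin.ext (by omega)
          exact hS3 (cG p.1) p.1 (hcG p.1) q.1 (this ▸ hcG q.1) hA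
      · -- p X, q PD
        have hp2 : (cG p.1 : ℕ) + 2 = g := hXeq p.1 h2p hpdp
        have hpdq' := hpdq
        simp only [hPDdef] at hpdq'
        rcases hpdq' with h1 | ⟨h1, -⟩
        · have hcq : cG q.1 = top := by apply Fin.ext; rw [htopv]; omega
          have hnot : ¬ ∃ b ∈ S top, G.Adj p.1 b := by
            intro hex
            exact hpdp (Or.inr ⟨hp2, hex⟩)
          exact hnot ⟨q.1, hcq ▸ hcG q.1, hA⟩
        · have : cG p.1 = cG q.1 := Fin.ext (by omega)
          exact hS3 (cG p.1) p.1 (hcG p.1) q.1 (this ▸ hcG q.1) hA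
      · -- both X
        have hp2 : (cG p.1 : ℕ) + 2 = g := hXeq p.1 h2p hpdp
        have hq2 : (cG q.1 : ℕ) + 2 = g := hXeq q.1 h2q hpdq
        have : cG p.1 = cG q.1 := Fin.ext (by omega)
        exact hS3 (cG p.1) p.1 (hcG p.1) q.1 (this ▸ hcG q.1) hA
  · -- greedy condition
    intro i j hij p hp
    have hp' : color p = (i : ℕ) := hp
    have hij' : (j : ℕ) < (i : ℕ) := hij
    have hpN : p.2 ∈ NH := by
      by_contra hx
      have h0 := hp'
      rw [hcolor, pcolor_of_not_mem NH cG cH PD p hx] at h0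
      omega
    -- helper: when the target class is low
    have hlow : (j : ℕ) < (cG p.1 : ℕ) → (j : ℕ) + 2 < g →
        ∃ w ∈ {p' : α × β | color p' = (j : ℕ)}, (tensorProd G H).Adj p w := by
      intro hjlt hj2
      have hjg : (j : ℕ) < g := by omega
      have hjlt' : ((⟨(j : ℕ), hjg⟩ : Fin g)) < cG p.1 := by
        rw [Fin.lt_def]; simpa
      obtain ⟨b, hb, hab⟩ := hS4 (cG p.1) ⟨(j : ℕ), hjg⟩ hjlt' p.1 (hcG p.1)
      have hcb : (cG b : ℕ) = (j : ℕ) := by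
        rw [← hcGu b ⟨(j : ℕ), hjg⟩ hb]
      obtain ⟨y, hy⟩ : ∃ y, H.Adj p.2 y := hpN
      have hyN : y ∈ NH := ⟨p.2, hy.symm⟩
      refine ⟨(b, y), ?_, ⟨hab, hy⟩⟩
      show color (b, y) = (j : ℕ)
      rw [hcolor, pcolor_low NH cG cH PD (b, y) hyN (by simpa [hcb] using hj2)]
      simpa using hcb
    by_cases h2p : (cG p.1 : ℕ) + 2 < g
    · -- p low: i = cG p.1
      rw [hcolor, pcolor_low NH cG cH PD p hpN h2p] at hp'
      exact hlow (by omega) (by omega)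
    · by_cases hpd : PD p.1
      · have hgep : g - 2 ≤ (cG p.1 : ℕ) := hPDge p.1 hpd
        rw [hcolor, pcolor_pd NH cG cH PD p hpN h2p hpd] at hp'
        rcases lt_or_ge (j : ℕ) (g - 2) with hj | hj
        · exact hlow (by omega) (by omega)
        · -- block target
          have hch := (cH p.2).isLt
          have hjh : (j : ℕ) - (g - 2) < (cH p.2 : ℕ) := by omega
          have hjh2 : (j : ℕ) - (g - 2) < h := by omega
          have hjlt' : ((⟨(j : ℕ) - (g - 2), hjh2⟩ : Fin h)) < cH p.2 := by
            rw [Fin.lt_def]; simpa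
          obtain ⟨y, hy, hxy⟩ := hT4 (cH p.2) ⟨(j : ℕ) - (g - 2), hjh2⟩ hjlt' p.2 (hcH p.2)
          have hcy : (cH y : ℕ) = (j : ℕ) - (g - 2) := by
            rw [← hcHu y ⟨(j : ℕ) - (g - 2), hjh2⟩ hy]
          obtain ⟨b, hbPD, hab⟩ := hPDnbr p.1 hpd
          have hyN : y ∈ NH := ⟨p.2, hxy.symm⟩
          have hbge : g - 2 ≤ (cG b : ℕ) := hPDge b hbPD
          refine ⟨(b, y), ?_, ⟨hab, hxy⟩⟩
          show color (b, y) = (j : ℕ)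
          rw [hcolor, pcolor_pd NH cG cH PD (b, y) hyN (by simp; omega) hbPD]
          show g - 2 + (cH y : ℕ) = (j : ℕ)
          omega
      · -- p X
        have hp2 : (cG p.1 : ℕ) + 2 = g := hXeq p.1 h2p hpd
        rw [hcolor, pcolor_x NH cG cH PD p hpN h2p hpd] at hp'
        exact hlow (by omega) (by omega)

/-- If `G` and `H` are finite graphs each having at least one edge, then
`Γ(G × H) ≥ Γ(G) + Γ(H) − 2`. -/
theorem grundy_tensorProd_ge {α β : Type*} [Fintype α] [Fintype β]
    (G : SimpleGraph α) (H : SimpleGraph β)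
    (hG : ∃ u v, G.Adj u v) (hH : ∃ u v, H.Adj u v) :
    grundy (tensorProd G H) ≥ grundy G + grundy H - 2 := by
  obtain ⟨S, hS⟩ := grundy_is_mem G
  obtain ⟨T, hT⟩ := grundy_is_mem H
  have hg := two_le_grundy G hG
  have hh := two_le_grundy H hH
  obtain ⟨C, hC⟩ := key_construction G H hg hh hS hT
  exact le_csSup (greedy_bddAbove (tensorProd G H)) ⟨C, hC⟩
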